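/- Graham's list scheduling guarantee: for scheduling n jobs with processing times p_j and precedence constraints on m identical machines, any greedy non-idling schedule (one in which no machine is idle whenever there is an available job all of whose predecessors are completed) has makespan at most (1/m)·Σ_j p_j + (1 − 1/m)·Δ, where Δ is the maximum total processing time along any precedence chain. In particular, since the optimum makespan OPT satisfies OPT ≥ (1/m)·Σ_j p_j and OPT ≥ Δ, any greedy schedule is a (2 − 1/m)-approximation. -/

import Mathlib

open Finset

/-- A valid non-preemptive schedule of precedence-constrained jobs on `m` identical
machines with makespan bound `Cmax`: every job finishes by `Cmax`, if `j ≺ j'` then `j'`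
starts after `j` completes, and jobs on the same machine occupy disjoint time intervals. -/
def ValidSchedule {J : Type} (m : ℕ) (p : J → ℕ) (prec : J → J → Prop)
    (start : J → ℕ) (mach : J → Fin m) (Cmax : ℕ) : Prop :=
  (∀ j, start j + p j ≤ Cmax) ∧
  (∀ j j', prec j j' → start j + p j ≤ start j') ∧
  (∀ j j', j ≠ j' → mach j = mach j' →
    start j + p j ≤ start j' ∨ start j' + p j' ≤ start j)

/-- Machine `i` is busy at time `t`: some job scheduled on `i` covers slot `t`. -/
def Busy {J : Type} (m : ℕ) (p : J → ℕ) (start : J → ℕ) (mach : J → Fin m)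
    (i : Fin m) (t : ℕ) : Prop :=
  ∃ j, mach j = i ∧ start j ≤ t ∧ t < start j + p j

/-- Job `j` is available at time `t`: it has not yet started, and all its
predecessors are completed by time `t`. -/
def Available {J : Type} (p : J → ℕ) (prec : J → J → Prop) (start : J → ℕ)
    (j : J) (t : ℕ) : Prop :=
  t < start j ∧ ∀ j', prec j' j → start j' + p j' ≤ t

/-- A greedy non-idling schedule: no machine is idle whenever some available job exists. -/
def Greedy {J : Type} (m : ℕ) (p : J → ℕ) (prec : J → J → Prop)
    (start : J → ℕ) (mach : J → Fin m) : Prop :=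
  ∀ t : ℕ, (∃ j, Available p prec start j t) → ∀ i : Fin m, Busy m p start mach i t

/-- Graham's bound. Any greedy non-idling schedule has makespan at most
`(1/m)·∑ p_j + (1 − 1/m)·Δ`, where `Δ` bounds the total processing time of every
precedence chain; in particular it is a `(2 − 1/m)`-approximation. -/
lemma aux_sum_runCount {n : ℕ} (p start : Fin n → ℕ) (C : ℕ)
    (hC : ∀ j, start j + p j ≤ C) :
    ∑ t ∈ Finset.range C,
      (Finset.univ.filter (fun j => start j ≤ t ∧ t < start j + p j)).card = ∑ j, p j := by
  simp only [Finset.card_filter]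
  rw [Finset.sum_comm]
  refine Finset.sum_congr rfl (fun j _ => ?_)
  rw [← Finset.card_filter]
  have : (Finset.range C).filter (fun t => start j ≤ t ∧ t < start j + p j)
      = Finset.Ico (start j) (start j + p j) := by
    ext t
    simp only [Finset.mem_filter, Finset.mem_range, Finset.mem_Ico]
    have := hC j
    omega
  rw [this, Nat.card_Ico]
  omega

open scoped Classical in
lemma aux_busyCount {n m : ℕ} (p start : Fin n → ℕ) (mach : Fin n → Fin m)
    (hdisj : ∀ j j', j ≠ j' → mach j = mach j' →
      start j + p j ≤ start j' ∨ start j' + p j' ≤ start j) (t : ℕ) :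
    (Finset.univ.filter (fun i => Busy m p start mach i t)).card
      = (Finset.univ.filter (fun j => start j ≤ t ∧ t < start j + p j)).card := by
  classical
  have himg : (Finset.univ.filter (fun i => Busy m p start mach i t))
      = (Finset.univ.filter (fun j => start j ≤ t ∧ t < start j + p j)).image mach := by
    ext i
    rw [Finset.mem_filter, Finset.mem_image]
    simp only [Finset.mem_filter, Finset.mem_univ, true_and, Busy]
    constructor
    · rintro ⟨j, h1, h2, h3⟩; exact ⟨j, ⟨h2, h3⟩, h1⟩
    · rintro ⟨j, ⟨h2, h3⟩, h1⟩; exact ⟨j, h1, h2, h3⟩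
  rw [himg]
  apply Finset.card_image_of_injOn
  intro a ha b hb hab
  simp only [Finset.mem_coe, Finset.mem_filter] at ha hb
  by_contra hne
  rcases hdisj a b hne hab with h | h <;> omega

open scoped Classical in
lemma aux_chain {n m : ℕ} (p : Fin n → ℕ) (hp : ∀ j, 0 < p j)
    (prec : Fin n → Fin n → Prop) (htrans : Transitive prec)
    (start : Fin n → ℕ) (mach : Fin n → Fin m)
    (hprec : ∀ j j', prec j j' → start j + p j ≤ start j')
    (hgreedy : Greedy m p prec start mach) :
    ∀ k (j : Fin n), start j ≤ k →
      ∃ C : Finset (Fin n), j ∈ C ∧ (∀ c ∈ C, c = j ∨ prec c j) ∧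
        (∀ a ∈ C, ∀ b ∈ C, a ≠ b → prec a b ∨ prec b a) ∧
        (∀ t (i : Fin m), t < start j + p j → ¬ Busy m p start mach i t →
          ∃ c ∈ C, start c ≤ t ∧ t < start c + p c) := by
  intro k
  induction k using Nat.strong_induction_on with
  | _ k ih =>
    intro j hjk
    by_cases hpred : ∃ j', prec j' j
    · set s := Finset.univ.filter (fun j' => prec j' j) with hs
      have hsne : s.Nonempty := ⟨hpred.choose, by simp [hs, hpred.choose_spec]⟩
      obtain ⟨j', hj's, hmax⟩ := Finset.exists_max_image s (fun j' => start j' + p j') hsne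
      have hj'j : prec j' j := (Finset.mem_filter.mp hj's).2
      have hlt : start j' < start j := by
        have h1 := hprec _ _ hj'j
        have h2 := hp j'
        omega
      obtain ⟨C, hjC, hrel, hchain, hcov⟩ := ih (start j') (lt_of_lt_of_le hlt hjk) j' le_rfl
      have haux : ∀ c ∈ C, prec c j := fun c hc => by
        rcases hrel c hc with rfl | h
        · exact hj'j
        · exact htrans h hj'j
      refine ⟨insert j C, Finset.mem_insert_self _ _, ?_, ?_, ?_⟩
      · intro c hc
        rcases Finset.mem_insert.mp hc with rfl | hc
        · exact Or.inl rfl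
        · exact Or.inr (haux c hc)
      · intro a ha b hb hab
        rcases Finset.mem_insert.mp ha with rfl | ha'
        · rcases Finset.mem_insert.mp hb with rfl | hb'
          · exact absurd rfl hab
          · exact Or.inr (haux b hb')
        · rcases Finset.mem_insert.mp hb with rfl | hb'
          · exact Or.inl (haux a ha')
          · exact hchain a ha' b hb' hab
      · intro t i ht hbusy
        by_cases h1 : start j ≤ t
        · exact ⟨j, Finset.mem_insert_self _ _, h1, ht⟩
        · push_neg at h1
          by_cases h2 : t < start j' + p j'
          · obtain ⟨c, hc, hrun⟩ := hcov t i h2 hbusy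
            exact ⟨c, Finset.mem_insert_of_mem hc, hrun⟩
          · push_neg at h2
            exfalso
            apply hbusy
            refine hgreedy t ⟨j, h1, fun j'' hj'' => ?_⟩ i
            have := hmax j'' (by simp [hs, hj''])
            omega
    · push_neg at hpred
      refine ⟨{j}, Finset.mem_singleton_self j,
        fun c hc => Or.inl (Finset.mem_singleton.mp hc), ?_, ?_⟩
      · intro a ha b hb hab
        exact absurd (by rw [Finset.mem_singleton.mp ha, Finset.mem_singleton.mp hb]) hab
      · intro t i ht hbusy
        by_cases h1 : start j ≤ t
        · exact ⟨j, Finset.mem_singleton_self j, h1, ht⟩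
        · exact absurd (hgreedy t ⟨j, by omega, fun j' hj' => absurd hj' (hpred j')⟩ i) hbusy

lemma aux_chain_sum {n : ℕ} (p start : Fin n → ℕ) (prec : Fin n → Fin n → Prop) (C' : ℕ)
    (hfin : ∀ j, start j + p j ≤ C')
    (hprec : ∀ j j', prec j j' → start j + p j ≤ start j')
    (C : Finset (Fin n)) (hchain : ∀ a ∈ C, ∀ b ∈ C, a ≠ b → prec a b ∨ prec b a) :
    ∑ c ∈ C, p c ≤ C' := by
  classical
  have h1 : ∑ c ∈ C, p c = ∑ c ∈ C, (Finset.Ico (start c) (start c + p c)).card := by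
    refine Finset.sum_congr rfl fun c _ => ?_
    rw [Nat.card_Ico]; omega
  have hdisj : ∀ a ∈ C, ∀ b ∈ C, a ≠ b →
      Disjoint (Finset.Ico (start a) (start a + p a)) (Finset.Ico (start b) (start b + p b)) := by
    intro a ha b hb hab
    rw [Finset.disjoint_left]
    intro t hta htb
    simp only [Finset.mem_Ico] at hta htb
    rcases hchain a ha b hb hab with h | h
    · have := hprec _ _ h; omega
    · have := hprec _ _ h; omega
  rw [h1, ← Finset.card_biUnion hdisj]
  calc (C.biUnion fun c => Finset.Ico (start c) (start c + p c)).card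
      ≤ (Finset.range C').card := by
        apply Finset.card_le_card
        intro t ht
        simp only [Finset.mem_biUnion, Finset.mem_Ico] at ht
        obtain ⟨c, _, h1, h2⟩ := ht
        simp only [Finset.mem_range]
        have := hfin c; omega
    _ = C' := Finset.card_range C'

theorem stmt3 (n m : ℕ) (hm : 0 < m) (p : Fin n → ℕ) (hp : ∀ j, 0 < p j)
    (prec : Fin n → Fin n → Prop) (htrans : Transitive prec) (hirrefl : ∀ j, ¬ prec j j)
    (start : Fin n → ℕ) (mach : Fin n → Fin m) (Cmax : ℕ)
    (hCmax : Cmax = Finset.univ.sup (fun j => start j + p j))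
    (hvalid : ValidSchedule m p prec start mach Cmax)
    (hgreedy : Greedy m p prec start mach)
    (Δ : ℕ)
    (hΔ : ∀ s : Finset (Fin n),
      (∀ a ∈ s, ∀ b ∈ s, a ≠ b → prec a b ∨ prec b a) → ∑ j ∈ s, p j ≤ Δ) :
    (Cmax : ℝ) ≤ (∑ j, (p j : ℝ)) / m + (1 - 1 / (m : ℝ)) * Δ ∧
    ∀ (start' : Fin n → ℕ) (mach' : Fin n → Fin m) (C' : ℕ),
      ValidSchedule m p prec start' mach' C' → (Cmax : ℝ) ≤ (2 - 1 / (m : ℝ)) * C' := by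
  classical
  obtain ⟨hfin, hprec, hdisj⟩ := hvalid
  -- obtain a covering chain
  obtain ⟨C, hchain, hcov⟩ : ∃ C : Finset (Fin n),
      (∀ a ∈ C, ∀ b ∈ C, a ≠ b → prec a b ∨ prec b a) ∧
      (∀ t (i : Fin m), t < Cmax → ¬ Busy m p start mach i t →
        ∃ c ∈ C, start c ≤ t ∧ t < start c + p c) := by
    rcases Nat.eq_zero_or_pos n with hn | hn
    · subst hn
      have h0 : Cmax = 0 := by simp [hCmax]
      exact ⟨∅, by simp, fun t i ht _ => by omega⟩
    · have hne : (Finset.univ : Finset (Fin n)).Nonempty := ⟨⟨0, hn⟩, Finset.mem_univ _⟩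
      obtain ⟨j₀, _, hj₀⟩ := Finset.exists_mem_eq_sup Finset.univ hne (fun j => start j + p j)
      obtain ⟨C, _, _, hchain, hcov⟩ :=
        aux_chain p hp prec htrans start mach hprec hgreedy (start j₀) j₀ le_rfl
      exact ⟨C, hchain, fun t i ht hb => hcov t i (by rw [hCmax, hj₀] at ht; exact ht) hb⟩
  set S := ∑ c ∈ C, p c with hS
  -- the key counting inequality
  have hcount : m * Cmax ≤ (∑ j, p j) + (m - 1) * S := by
    have hsplit : ∀ t : ℕ,
        (Finset.univ.filter (fun i => Busy m p start mach i t)).card +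
        (Finset.univ.filter (fun i => ¬ Busy m p start mach i t)).card = m := by
      intro t
      rw [Finset.card_filter_add_card_filter_not, Finset.card_univ, Fintype.card_fin]
    have h1 : m * Cmax = ∑ t ∈ Finset.range Cmax,
        ((Finset.univ.filter (fun i => Busy m p start mach i t)).card +
         (Finset.univ.filter (fun i => ¬ Busy m p start mach i t)).card) := by
      rw [Finset.sum_congr rfl fun t _ => hsplit t, Finset.sum_const, Finset.card_range,
        smul_eq_mul, mul_comm]
    rw [h1, Finset.sum_add_distrib]
    have hbusy : ∑ t ∈ Finset.range Cmax,
        (Finset.univ.filter (fun i => Busy m p start mach i t)).card = ∑ j, p j := by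
      rw [Finset.sum_congr rfl fun t _ => aux_busyCount p start mach hdisj t]
      exact aux_sum_runCount p start Cmax hfin
    have hidle : ∑ t ∈ Finset.range Cmax,
        (Finset.univ.filter (fun i => ¬ Busy m p start mach i t)).card ≤ (m - 1) * S := by
      set T := (Finset.range Cmax).filter
        (fun t => ∃ c ∈ C, start c ≤ t ∧ t < start c + p c) with hT
      have hsum := Finset.sum_filter_add_sum_filter_not (Finset.range Cmax)
        (fun t => ∃ c ∈ C, start c ≤ t ∧ t < start c + p c)
        (fun t => (Finset.univ.filter (fun i => ¬ Busy m p start mach i t)).card)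
      rw [← hsum]
      have hzero : ∑ t ∈ (Finset.range Cmax).filter
          (fun t => ¬ ∃ c ∈ C, start c ≤ t ∧ t < start c + p c),
          (Finset.univ.filter (fun i => ¬ Busy m p start mach i t)).card = 0 := by
        apply Finset.sum_eq_zero
        intro t ht
        simp only [Finset.mem_filter, Finset.mem_range] at ht
        rw [Finset.card_eq_zero, Finset.filter_eq_empty_iff]
        intro i _ hni
        exact ht.2 (hcov t i ht.1 hni)
      have hone : ∑ t ∈ T,
          (Finset.univ.filter (fun i => ¬ Busy m p start mach i t)).card ≤ (m - 1) * S := by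
        have hbound : ∀ t ∈ T,
            (Finset.univ.filter (fun i => ¬ Busy m p start mach i t)).card ≤ m - 1 := by
          intro t ht
          simp only [hT, Finset.mem_filter] at ht
          obtain ⟨c, hcC, hrun⟩ := ht.2
          have hmachbusy : Busy m p start mach (mach c) t := ⟨c, rfl, hrun⟩
          have hsub : Finset.univ.filter (fun i => ¬ Busy m p start mach i t)
              ⊆ Finset.univ.erase (mach c) := by
            intro i hi
            simp only [Finset.mem_filter] at hi
            refine Finset.mem_erase.mpr ⟨?_, Finset.mem_univ _⟩
            rintro rfl
            exact hi.2 hmachbusy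
          calc (Finset.univ.filter (fun i => ¬ Busy m p start mach i t)).card
              ≤ (Finset.univ.erase (mach c)).card := Finset.card_le_card hsub
            _ = m - 1 := by
                rw [Finset.card_erase_of_mem (Finset.mem_univ _), Finset.card_univ,
                  Fintype.card_fin]
        have hTcard : T.card ≤ S := by
          have hsub : T ⊆ C.biUnion (fun c => Finset.Ico (start c) (start c + p c)) := by
            intro t ht
            simp only [hT, Finset.mem_filter] at ht
            obtain ⟨c, hcC, h1, h2⟩ := ht.2
            exact Finset.mem_biUnion.mpr ⟨c, hcC, Finset.mem_Ico.mpr ⟨h1, h2⟩⟩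
          calc T.card ≤ (C.biUnion (fun c => Finset.Ico (start c) (start c + p c))).card :=
                Finset.card_le_card hsub
            _ ≤ ∑ c ∈ C, (Finset.Ico (start c) (start c + p c)).card :=
                Finset.card_biUnion_le
            _ = S := by
                rw [hS]
                exact Finset.sum_congr rfl fun c _ => by rw [Nat.card_Ico]; omega
        calc ∑ t ∈ T, (Finset.univ.filter (fun i => ¬ Busy m p start mach i t)).card
            ≤ ∑ _t ∈ T, (m - 1) := Finset.sum_le_sum hbound
          _ = T.card * (m - 1) := by rw [Finset.sum_const, smul_eq_mul]
          _ ≤ S * (m - 1) := Nat.mul_le_mul_right _ hTcard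
          _ = (m - 1) * S := Nat.mul_comm _ _
      rw [← hT]
      omega
    omega
  have hm' : (0 : ℝ) < m := by exact_mod_cast hm
  have hSΔ : S ≤ Δ := hΔ C hchain
  constructor
  · -- first bound
    have hnat : m * Cmax ≤ (∑ j, p j) + (m - 1) * Δ :=
      le_trans hcount (by exact Nat.add_le_add_left (Nat.mul_le_mul_left _ hSΔ) _)
    have hnat' : m * Cmax + Δ ≤ (∑ j, p j) + m * Δ := by
      have e1 : (m - 1) * Δ = m * Δ - Δ := Nat.sub_one_mul m Δ
      have e2 : Δ ≤ m * Δ := Nat.le_mul_of_pos_left Δ hm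
      omega
    have hr : (m : ℝ) * Cmax + Δ ≤ (∑ j, (p j : ℝ)) + m * Δ := by
      exact_mod_cast hnat'
    have heq : ((∑ j, (p j : ℝ)) + ((m : ℝ) - 1) * Δ) / m
        = (∑ j, (p j : ℝ)) / m + (1 - 1 / (m : ℝ)) * Δ := by
      field_simp
    rw [← heq, le_div_iff₀ hm']
    linarith
  · -- approximation guarantee
    intro start' mach' C' hval'
    obtain ⟨hfin', hprec', hdisj'⟩ := hval'
    have hPle : ∑ j, p j ≤ m * C' := by
      rw [← aux_sum_runCount p start' C' hfin']
      calc ∑ t ∈ Finset.range C',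
            (Finset.univ.filter (fun j => start' j ≤ t ∧ t < start' j + p j)).card
          ≤ ∑ _t ∈ Finset.range C', m := by
            refine Finset.sum_le_sum fun t _ => ?_
            rw [← aux_busyCount p start' mach' hdisj' t]
            calc (Finset.univ.filter (fun i => Busy m p start' mach' i t)).card
                ≤ (Finset.univ : Finset (Fin m)).card := Finset.card_le_card (Finset.filter_subset _ _)
              _ = m := by rw [Finset.card_univ, Fintype.card_fin]
        _ = m * C' := by rw [Finset.sum_const, Finset.card_range, smul_eq_mul, mul_comm]
    have hSle : S ≤ C' := aux_chain_sum p start' prec C' hfin' hprec' C hchain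
    have hnat : m * Cmax + C' ≤ 2 * (m * C') := by
      have h1 : (m - 1) * S ≤ (m - 1) * C' := Nat.mul_le_mul_left _ hSle
      have e1 : (m - 1) * C' = m * C' - C' := Nat.sub_one_mul m C'
      have e2 : C' ≤ m * C' := Nat.le_mul_of_pos_left C' hm
      omega
    have hr : (m : ℝ) * Cmax + C' ≤ 2 * ((m : ℝ) * C') := by
      exact_mod_cast hnat
    rw [show (2 - 1 / (m : ℝ)) * C' = (2 * ((m : ℝ) * C') - C') / m by field_simp,
      le_div_iff₀ hm']
    linarith
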